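/- Let $\alpha \in (0,1)$ and $\theta \in \left[\frac{\alpha}{2} - \frac{1-\alpha}{1+\alpha}, \frac{\alpha}{2}\right]$. Define $\omega_0 = 1 + \frac{\alpha}{2} - \theta$ and $\omega_k = \left(1+\frac{\alpha}{2}-\theta\right)\kappa_k + \left(\theta - \frac{\alpha}{2}\right)\kappa_{k-1}$ for $k \geq 1$, where $\kappa_k = (-1)^k\binom{\alpha}{k}$. Then $\omega_0 > 0$ and $\omega_k \leq 0$ for all $k \geq 1$. -/
import Mathlib


noncomputable def genBinom (α : ℝ) (k : ℕ) : ℝ :=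
  (∏ j ∈ Finset.range k, (α - j)) / (Nat.factorial k)

noncomputable def kappa (α : ℝ) (k : ℕ) : ℝ := (-1 : ℝ) ^ k * genBinom α k

/-- Coefficients of `ω(ξ) = (1-ξ)^α [1 + (α/2 - θ)(1-ξ)]`. -/
noncomputable def omegaCoeff (α θ : ℝ) : ℕ → ℝ
  | 0 => 1 + α / 2 - θ
  | (k + 1) => (1 + α / 2 - θ) * kappa α (k + 1) + (θ - α / 2) * kappa α k

lemma kappa_zero (α : ℝ) : kappa α 0 = 1 := by
  simp [kappa, genBinom]

lemma kappa_succ (α : ℝ) (k : ℕ) :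
    kappa α (k + 1) = kappa α k * ((k : ℝ) - α) / (k + 1) := by
  have hk : ((k : ℝ) + 1) ≠ 0 := by positivity
  have hf : ((Nat.factorial k : ℝ)) ≠ 0 := by
    exact_mod_cast Nat.factorial_ne_zero k
  simp only [kappa, genBinom, Finset.prod_range_succ, Nat.factorial_succ, pow_succ]
  push_cast
  field_simp
  ring

lemma kappa_one (α : ℝ) : kappa α 1 = -α := by
  have := kappa_succ α 0
  simpa [kappa_zero] using this

lemma kappa_neg (α : ℝ) (hα : α ∈ Set.Ioo (0 : ℝ) 1) :
    ∀ k : ℕ, 1 ≤ k → kappa α k < 0 := by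
  intro k hk
  induction k with
  | zero => omega
  | succ n ih =>
    rcases Nat.eq_or_lt_of_le hk with h | h
    · rw [show n + 1 = 1 by omega, kappa_one]; linarith [hα.1]
    · have hn : 1 ≤ n := by omega
      have hneg := ih hn
      rw [kappa_succ]
      have h1 : (0 : ℝ) < (n : ℝ) - α := by
        have : (1 : ℝ) ≤ (n : ℝ) := by exact_mod_cast hn
        linarith [hα.2]
      have h2 : (0 : ℝ) < (n : ℝ) + 1 := by positivity
      exact div_neg_of_neg_of_pos (mul_neg_of_neg_of_pos hneg h1) h2

/-- For `α ∈ (0,1)` and `θ ∈ [α/2 - (1-α)/(1+α), α/2]`: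
`ω₀ > 0` and `ω_k ≤ 0` for all `k ≥ 1`. -/
theorem stmt6 (α θ : ℝ) (hα : α ∈ Set.Ioo (0 : ℝ) 1)
    (hθ : θ ∈ Set.Icc (α / 2 - (1 - α) / (1 + α)) (α / 2)) :
    0 < omegaCoeff α θ 0 ∧ ∀ k : ℕ, 1 ≤ k → omegaCoeff α θ k ≤ 0 := by
  obtain ⟨hα0, hα1⟩ := hα
  obtain ⟨hθl, hθu⟩ := hθ
  have h1α : (0 : ℝ) < 1 + α := by linarith
  -- a = α/2 - θ
  set a : ℝ := α / 2 - θ with ha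
  have ha0 : 0 ≤ a := by simp [ha]; linarith
  have haub : a * (1 + α) ≤ 1 - α := by
    have : a ≤ (1 - α) / (1 + α) := by simp [ha]; linarith
    calc a * (1 + α) ≤ (1 - α) / (1 + α) * (1 + α) := by
          apply mul_le_mul_of_nonneg_right this (le_of_lt h1α)
      _ = 1 - α := by field_simp
  constructor
  · show (0 : ℝ) < 1 + α / 2 - θ
    linarith
  · intro k hk
    obtain ⟨m, rfl⟩ : ∃ m, k = m + 1 := ⟨k - 1, by omega⟩
    show (1 + α / 2 - θ) * kappa α (m + 1) + (θ - α / 2) * kappa α m ≤ 0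
    rcases Nat.eq_zero_or_pos m with rfl | hm
    · rw [kappa_one, kappa_zero]
      nlinarith
    · have hκm := kappa_neg α ⟨hα0, hα1⟩ m hm
      rw [kappa_succ]
      have hm1 : (1 : ℝ) ≤ (m : ℝ) := by exact_mod_cast hm
      have hmp : (0 : ℝ) < (m : ℝ) + 1 := by positivity
      have key : (1 + a) * ((m : ℝ) - α) - a * ((m : ℝ) + 1) ≥ 0 := by
        have : a * (1 + α) ≤ (m : ℝ) - α := by linarith
        nlinarith
      have : (1 + α / 2 - θ) * (kappa α m * ((m : ℝ) - α) / (↑m + 1))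
            + (θ - α / 2) * kappa α m
          = kappa α m * ((1 + a) * ((m : ℝ) - α) - a * ((m : ℝ) + 1)) / ((m : ℝ) + 1) := by
        field_simp [ha]
        ring
      rw [this]
      apply div_nonpos_of_nonpos_of_nonneg _ (le_of_lt hmp)
      exact mul_nonpos_of_nonpos_of_nonneg (le_of_lt hκm) key
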